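/- A complex symmetric unitary matrix u can be written as u = v d vᵀ where v is a real orthogonal matrix and d is a diagonal unitary matrix. -/

import Mathlib

open Matrix

/-- A complex symmetric unitary matrix `u` can be written as `u = v * d * vᵀ`
where `v` is a real orthogonal matrix and `d` is a diagonal matrix whose
diagonal entries have modulus 1. -/
theorem symmetric_unitary_eq_real_orthogonal_diag
    (n : ℕ) (u : Matrix (Fin n) (Fin n) ℂ)
    (hsymm : u = uᵀ)
    (hunit : u * (u.map (starRingEnd ℂ))ᵀ = 1) :
    ∃ v d : Matrix (Fin n) (Fin n) ℂ,
      (∀ i j, (v i j).im = 0) ∧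
      v * vᵀ = 1 ∧
      d.IsDiag ∧
      (∀ i, ‖d i i‖ = 1) ∧
      u = v * d * vᵀ := by
  classical
  -- Real and imaginary parts of `u`.
  set A : Matrix (Fin n) (Fin n) ℝ := Matrix.of fun i j => (u i j).re with hA
  set B : Matrix (Fin n) (Fin n) ℝ := Matrix.of fun i j => (u i j).im with hB
  have husym : ∀ i j, u i j = u j i := fun i j => congrFun (congrFun hsymm i) j
  have hu : u * u.map (starRingEnd ℂ) = 1 := by
    have ht : (u.map (starRingEnd ℂ))ᵀ = u.map (starRingEnd ℂ) := by
      rw [← Matrix.transpose_map, ← hsymm]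
    rwa [ht] at hunit
  have hentry : ∀ i j, ∑ k, u i k * (starRingEnd ℂ) (u k j) = if i = j then (1:ℂ) else 0 := by
    intro i j
    have h := congrFun (congrFun hu i) j
    simpa [Matrix.mul_apply, Matrix.map_apply, Matrix.one_apply] using h
  -- `A` and `B` are commuting real symmetric matrices with `A² + B² = 1`.
  have hR : A * A + B * B = 1 := by
    ext i j
    have h := congrArg Complex.re (hentry i j)
    simp only [Complex.re_sum, Complex.mul_re, Complex.conj_re, Complex.conj_im, mul_neg,
      sub_neg_eq_add] at h
    simp only [Matrix.add_apply, Matrix.mul_apply, Matrix.one_apply, ← Finset.sum_add_distrib]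
    simpa [hA, hB, apply_ite Complex.re] using h
  have hC : B * A = A * B := by
    ext i j
    have h := congrArg Complex.im (hentry i j)
    simp only [Complex.im_sum, Complex.mul_im, Complex.conj_re, Complex.conj_im, mul_neg] at h
    simp only [Matrix.mul_apply]
    have h2 : ∑ k, (B i k * A k j - A i k * B k j) = 0 := by
      simpa [hA, hB, apply_ite Complex.im, sub_eq_add_neg, add_comm] using h
    rw [Finset.sum_sub_distrib] at h2
    linarith [h2]
  have hAh : A.IsHermitian := by
    ext i j
    simp only [Matrix.conjTranspose_apply, hA, Matrix.of_apply, star_trivial]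
    rw [husym j i]
  have hBh : B.IsHermitian := by
    ext i j
    simp only [Matrix.conjTranspose_apply, hB, Matrix.of_apply, star_trivial]
    rw [husym j i]
  -- Simultaneous diagonalization of `A` and `B` by a real orthonormal eigenbasis.
  set TA := Matrix.toEuclideanLin A with hTAdef
  set TB := Matrix.toEuclideanLin B with hTBdef
  have hTA : TA.IsSymmetric := Matrix.isHermitian_iff_isSymmetric.mp hAh
  have hTB : TB.IsSymmetric := Matrix.isHermitian_iff_isSymmetric.mp hBh
  have hmul : ∀ (M N : Matrix (Fin n) (Fin n) ℝ),
      Matrix.toEuclideanLin (M * N) = (Matrix.toEuclideanLin M) ∘ₗ (Matrix.toEuclideanLin N) := by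
    intro M N
    apply LinearMap.ext
    intro x
    simp [Matrix.toEuclideanLin_apply, Matrix.mulVec_mulVec]
  have hcomm : Commute TA TB := by
    show TA * TB = TB * TA
    have h1 : TA * TB = Matrix.toEuclideanLin (A * B) := by rw [hmul]; rfl
    have h2 : TB * TA = Matrix.toEuclideanLin (B * A) := by rw [hmul]; rfl
    rw [h1, h2, hC]
  set V : ℝ × ℝ → Submodule ℝ (EuclideanSpace ℝ (Fin n)) :=
    fun p => Module.End.eigenspace TA p.2 ⊓ Module.End.eigenspace TB p.1 with hV
  have internal : DirectSum.IsInternal V :=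
    LinearMap.IsSymmetric.directSum_isInternal_of_commute hTA hTB hcomm
  haveI : Fintype {p : ℝ × ℝ // V p ≠ ⊥} :=
    (Submodule.finite_ne_bot_of_iSupIndep internal.submodule_iSupIndep).fintype
  have internal' : DirectSum.IsInternal (fun p : {p : ℝ × ℝ // V p ≠ ⊥} => V p) :=
    DirectSum.isInternal_ne_bot_iff.mpr internal
  have hfam : OrthogonalFamily ℝ (fun p : {p : ℝ × ℝ // V p ≠ ⊥} => V p)
      (fun p => (V p).subtypeₗᵢ) := fun p q hpq =>
    (LinearMap.IsSymmetric.orthogonalFamily_eigenspace_inf_eigenspace hTA hTB)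
      (fun h => hpq (Subtype.ext h))
  have hn' : Module.finrank ℝ (EuclideanSpace ℝ (Fin n)) = n := finrank_euclideanSpace_fin
  set b := internal'.subordinateOrthonormalBasis hn' hfam with hb
  set μ : Fin n → {p : ℝ × ℝ // V p ≠ ⊥} :=
    fun a => internal'.subordinateOrthonormalBasisIndex hn' a hfam with hμ
  have hbmem : ∀ a, b a ∈ V (μ a) :=
    fun a => internal'.subordinateOrthonormalBasis_subordinate hn' a hfam
  set α : Fin n → ℝ := fun a => (μ a).val.2 with hα
  set β : Fin n → ℝ := fun a => (μ a).val.1 with hβ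
  have heigA : ∀ a, Matrix.toEuclideanLin A (b a) = α a • b a :=
    fun a => Module.End.mem_eigenspace_iff.mp (hbmem a).1
  have heigB : ∀ a, Matrix.toEuclideanLin B (b a) = β a • b a :=
    fun a => Module.End.mem_eigenspace_iff.mp (hbmem a).2
  have hAb : ∀ a i, (∑ k, A i k * b a k) = α a * b a i := by
    intro a i
    have h := congrArg (fun x : EuclideanSpace ℝ (Fin n) => x i) (heigA a)
    simpa [Matrix.toEuclideanLin_apply, Matrix.mulVec, dotProduct] using h
  have hBb : ∀ a i, (∑ k, B i k * b a k) = β a * b a i := by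
    intro a i
    have h := congrArg (fun x : EuclideanSpace ℝ (Fin n) => x i) (heigB a)
    simpa [Matrix.toEuclideanLin_apply, Matrix.mulVec, dotProduct] using h
  -- The real orthogonal matrix whose columns are the eigenbasis vectors.
  set vR : Matrix (Fin n) (Fin n) ℝ := Matrix.of fun i j => b j i with hvR
  have hvtv : vRᵀ * vR = 1 := by
    ext i j
    have h := orthonormal_iff_ite.mp b.orthonormal i j
    simp only [PiLp.inner_apply, RCLike.inner_apply, starRingEnd_apply, star_trivial] at h
    simpa [Matrix.mul_apply, Matrix.one_apply, hvR, mul_comm] using h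
  have hvvt : vR * vRᵀ = 1 := mul_eq_one_comm.mp hvtv
  have hAv : A * vR = vR * Matrix.diagonal α := by
    ext i j
    rw [Matrix.mul_diagonal]
    simpa [Matrix.mul_apply, hvR, mul_comm] using hAb j i
  have hBv : B * vR = vR * Matrix.diagonal β := by
    ext i j
    rw [Matrix.mul_diagonal]
    simpa [Matrix.mul_apply, hvR, mul_comm] using hBb j i
  have hA_eq : A = vR * Matrix.diagonal α * vRᵀ := by
    calc A = A * (vR * vRᵀ) := by rw [hvvt, mul_one]
    _ = (A * vR) * vRᵀ := by rw [mul_assoc]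
    _ = vR * Matrix.diagonal α * vRᵀ := by rw [hAv]
  have hB_eq : B = vR * Matrix.diagonal β * vRᵀ := by
    calc B = B * (vR * vRᵀ) := by rw [hvvt, mul_one]
    _ = (B * vR) * vRᵀ := by rw [mul_assoc]
    _ = vR * Matrix.diagonal β * vRᵀ := by rw [hBv]
  -- The diagonal entries have modulus one.
  have habs : ∀ j, α j * α j + β j * β j = 1 := by
    have hsum : vR * Matrix.diagonal (fun j => α j * α j + β j * β j) = vR := by
      have e1 : vR * Matrix.diagonal (fun j => α j * α j + β j * β j)
          = (A * A + B * B) * vR := by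
        calc vR * Matrix.diagonal (fun j => α j * α j + β j * β j)
            = vR * (Matrix.diagonal α * Matrix.diagonal α)
              + vR * (Matrix.diagonal β * Matrix.diagonal β) := by
              rw [Matrix.diagonal_mul_diagonal, Matrix.diagonal_mul_diagonal, ← mul_add,
                ← Matrix.diagonal_add]
        _ = (A * A + B * B) * vR := by
              have e2 : A * A * vR = vR * (Matrix.diagonal α * Matrix.diagonal α) := by
                rw [mul_assoc, hAv, ← mul_assoc, hAv, mul_assoc]
              have e3 : B * B * vR = vR * (Matrix.diagonal β * Matrix.diagonal β) := by
                rw [mul_assoc, hBv, ← mul_assoc, hBv, mul_assoc]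
              rw [add_mul, e2, e3]
      rw [e1, hR, one_mul]
    intro j
    obtain ⟨i, hi⟩ : ∃ i, b j i ≠ 0 := by
      by_contra h
      push_neg at h
      exact b.orthonormal.ne_zero j (by ext k; simp [h k])
    have h2 : (vR * Matrix.diagonal (fun j => α j * α j + β j * β j)) i j = vR i j :=
      congrFun (congrFun hsum i) j
    rw [Matrix.mul_diagonal] at h2
    have hvij : vR i j = b j i := rfl
    rw [hvij] at h2
    exact mul_left_cancel₀ hi (by rw [mul_one, h2])
  -- Assemble the complex decomposition.
  have hu' : ∀ i j, u i j = (A i j : ℂ) + B i j * Complex.I := by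
    intro i j
    exact (Complex.re_add_im (u i j)).symm
  refine ⟨vR.map (Complex.ofRealHom : ℝ →+* ℂ),
    Matrix.diagonal (fun j => (α j : ℂ) + β j * Complex.I), ?_, ?_, ?_, ?_, ?_⟩
  · intro i j; simp [Matrix.map_apply]
  · rw [← Matrix.transpose_map, ← Matrix.map_mul, hvvt]
    simp
  · exact Matrix.isDiag_diagonal _
  · intro j
    simp only [Matrix.diagonal_apply_eq, Complex.norm_add_mul_I]
    rw [show α j ^ 2 + β j ^ 2 = 1 by have := habs j; nlinarith, Real.sqrt_one]
  · have hd : Matrix.diagonal (fun j => (α j : ℂ) + β j * Complex.I)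
        = (Matrix.diagonal α).map (Complex.ofRealHom : ℝ →+* ℂ)
          + Complex.I • (Matrix.diagonal β).map (Complex.ofRealHom : ℝ →+* ℂ) := by
      ext i j
      by_cases h : i = j <;>
        simp [Matrix.diagonal_apply, h, Matrix.map_apply, mul_comm]
    calc u = A.map (Complex.ofRealHom : ℝ →+* ℂ)
        + Complex.I • B.map (Complex.ofRealHom : ℝ →+* ℂ) := by
          ext i j
          simp [Matrix.map_apply, Matrix.add_apply, hu' i j, mul_comm]
    _ = (vR * Matrix.diagonal α * vRᵀ).map (Complex.ofRealHom : ℝ →+* ℂ)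
        + Complex.I • (vR * Matrix.diagonal β * vRᵀ).map (Complex.ofRealHom : ℝ →+* ℂ) := by
          rw [← hA_eq, ← hB_eq]
    _ = vR.map (Complex.ofRealHom : ℝ →+* ℂ)
        * Matrix.diagonal (fun j => (α j : ℂ) + β j * Complex.I)
        * (vR.map (Complex.ofRealHom : ℝ →+* ℂ))ᵀ := by
          rw [hd, ← Matrix.transpose_map, Matrix.map_mul, Matrix.map_mul,
            Matrix.map_mul, Matrix.map_mul]
          simp only [mul_add, add_mul, mul_smul_comm, smul_mul_assoc]
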